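/- Let X be a proper metric space with basepoint x₀, let X̄ be its Higson compactification with canonical map ι : X → X̄, and let A, B ⊆ X be diverging subsets, i.e. for every D > 0 there is r > 0 such that dist(a, b) ≥ D for all a ∈ A ∖ B_r(x₀) and b ∈ B ∖ B_r(x₀). Then the closures of ι(A) and ι(B) in X̄ intersect only inside ι(X): cl(ι(A)) ∩ cl(ι(B)) ⊆ ι(X). -/

import Mathlib

open Metric BoundedContinuousFunction

section Higson

variable {X : Type*} [MetricSpace X]

/-- A function on the pointed metric space `X` has decaying variation if the diameters of images
of `R`-balls tend to zero at infinity. -/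
def HasDecayingVariation (x₀ : X) (f : X →ᵇ ℂ) : Prop :=
  ∀ R : ℝ, 0 < R → ∀ ε : ℝ, 0 < ε → ∃ t : ℝ, 0 < t ∧ ∀ x : X, t ≤ dist x x₀ →
    EMetric.diam (⇑f '' closedBall x R) ≤ ENNReal.ofReal ε

/-- The Higson algebra: the closed star-subalgebra of `C_b(X, ℂ)` generated by the constants and
the bounded continuous functions of decaying variation. -/
noncomputable def higsonAlgebra (x₀ : X) : StarSubalgebra ℂ (X →ᵇ ℂ) :=
  (StarAlgebra.adjoin ℂ {f : X →ᵇ ℂ | HasDecayingVariation x₀ f}).topologicalClosure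

/-- The Higson compactification: the character space (Gelfand spectrum) of the Higson algebra. -/
def HigsonCompactification (x₀ : X) :=
  WeakDual.characterSpace ℂ ↥(higsonAlgebra x₀)

/-- Evaluation at a point of `X`, as a continuous linear functional on the Higson algebra. -/
noncomputable def higsonEvalCLM (x₀ x : X) : WeakDual ℂ ↥(higsonAlgebra x₀) :=
  { toFun := fun f => (f : X →ᵇ ℂ) x
    map_add' := fun _ _ => rfl
    map_smul' := fun _ _ => rfl
    cont := (lipschitz_eval_const x).continuous.comp continuous_subtype_val }

theorem higsonEvalCLM_mem (x₀ x : X) :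
    higsonEvalCLM x₀ x ∈ WeakDual.characterSpace ℂ ↥(higsonAlgebra x₀) := by
  constructor
  · intro h
    have h1 : higsonEvalCLM x₀ x (1 : ↥(higsonAlgebra x₀)) = 0 := by rw [h]; rfl
    exact one_ne_zero (α := ℂ) h1
  · intro f g
    rfl

/-- The canonical map `ι` from `X` to its Higson compactification, sending `x` to the evaluation
character. -/
noncomputable def higsonIota (x₀ : X) (x : X) : HigsonCompactification x₀ :=
  ⟨higsonEvalCLM x₀ x, higsonEvalCLM_mem x₀ x⟩

end Higson

section Aux

variable {X : Type*} [MetricSpace X]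

private lemma frac_diff_le {u v u' v' d c : ℝ} (hu : 0 ≤ u) (hv : 0 ≤ v)
    (hu' : 0 ≤ u') (hv' : 0 ≤ v') (hc : 0 < c) (h1 : c ≤ u + v) (h2 : c ≤ u' + v')
    (hd1 : |u - u'| ≤ d) (hd2 : |v - v'| ≤ d) :
    |u / (u + v) - u' / (u' + v')| ≤ d / c := by
  have hs : 0 < u + v := lt_of_lt_of_le hc h1
  have hs' : 0 < u' + v' := lt_of_lt_of_le hc h2
  have hd0 : 0 ≤ d := le_trans (abs_nonneg _) hd1
  have key : u / (u + v) - u' / (u' + v') = (u * v' - u' * v) / ((u + v) * (u' + v')) := by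
    field_simp
    ring
  rw [key, abs_div, abs_of_pos (mul_pos hs hs')]
  have hnum : |u * v' - u' * v| ≤ (u + v) * d := by
    have e : u * v' - u' * v = u * (v' - v) + (u - u') * v := by ring
    rw [e]
    calc |u * (v' - v) + (u - u') * v| ≤ |u * (v' - v)| + |(u - u') * v| := abs_add_le _ _
      _ ≤ u * d + d * v := by
          rw [abs_mul, abs_mul, abs_of_nonneg hu, abs_of_nonneg hv, abs_sub_comm v' v]
          have h3 : |u - u'| * v ≤ d * v := mul_le_mul_of_nonneg_right hd1 hv
          have h4 : u * |v - v'| ≤ u * d := mul_le_mul_of_nonneg_left hd2 hu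
          exact add_le_add h4 h3
      _ = (u + v) * d := by ring
  calc |u * v' - u' * v| / ((u + v) * (u' + v'))
      ≤ ((u + v) * d) / ((u + v) * (u' + v')) := by gcongr
    _ = d / (u' + v') := by rw [mul_div_mul_left _ _ (ne_of_gt hs)]
    _ ≤ d / c := by
        apply div_le_div_of_nonneg_left hd0 hc h2

private lemma sum_infDist_ge {A' B' : Set X} (hA' : A'.Nonempty) (hB' : B'.Nonempty)
    {c : ℝ} (hsep : ∀ a ∈ A', ∀ b ∈ B', c ≤ dist a b) (x : X) :
    c ≤ infDist x A' + infDist x B' := by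
  by_contra h
  push_neg at h
  have hu : infDist x A' < c - infDist x B' := by linarith
  obtain ⟨a, ha, hda⟩ := (infDist_lt_iff hA').1 hu
  have hv : infDist x B' < c - dist x a := by linarith [infDist_nonneg (s := B') (x := x)]
  obtain ⟨b, hb, hdb⟩ := (infDist_lt_iff hB').1 hv
  have := hsep a ha b hb
  have := dist_triangle a x b
  rw [dist_comm a x] at this
  linarith

private lemma exists_sep (x₀ : X) (A' B' : Set X) (hA' : A'.Nonempty) (hB' : B'.Nonempty)
    (hsep1 : ∀ a ∈ A', ∀ b ∈ B', (1 : ℝ) ≤ dist a b)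
    (hfar : ∀ M : ℝ, 0 < M → ∃ r : ℝ, ∀ a ∈ A', r < dist a x₀ → ∀ b ∈ B',
      r < dist b x₀ → 2 * M ≤ dist a b) :
    ∃ F : X →ᵇ ℂ, HasDecayingVariation x₀ F ∧ (∀ a ∈ A', F a = 0) ∧ (∀ b ∈ B', F b = 1) := by
  set u : X → ℝ := fun x => infDist x A' with hu_def
  set v : X → ℝ := fun x => infDist x B' with hv_def
  have hdenom : ∀ x, 1 ≤ u x + v x := sum_infDist_ge hA' hB' hsep1
  have hdpos : ∀ x, 0 < u x + v x := fun x => lt_of_lt_of_le one_pos (hdenom x)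
  set f₀ : X → ℝ := fun x => u x / (u x + v x) with hf₀_def
  have hf₀cont : Continuous f₀ := by
    apply Continuous.div
    · exact continuous_infDist_pt A'
    · exact (continuous_infDist_pt A').add (continuous_infDist_pt B')
    · exact fun x => ne_of_gt (hdpos x)
  have hf₀mem : ∀ x, 0 ≤ f₀ x ∧ f₀ x ≤ 1 := by
    intro x
    constructor
    · exact div_nonneg infDist_nonneg (le_of_lt (hdpos x))
    · rw [div_le_one (hdpos x)]
      have : (0 : ℝ) ≤ v x := infDist_nonneg
      linarith
  refine ⟨ofNormedAddCommGroup (fun x => ((f₀ x : ℝ) : ℂ))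
    (Complex.continuous_ofReal.comp hf₀cont) 1 ?_, ?_, ?_, ?_⟩
  · intro x
    rw [Complex.norm_real, Real.norm_eq_abs, abs_le]
    exact ⟨by linarith [(hf₀mem x).1], (hf₀mem x).2⟩
  · -- decaying variation
    intro R hR ε hε
    set M : ℝ := 2 * R / ε with hM_def
    have hM : 0 < M := by positivity
    obtain ⟨r, hr⟩ := hfar M hM
    refine ⟨max (r + M + R + 1) 1, lt_of_lt_of_le one_pos (le_max_right _ _), ?_⟩
    intro x hx
    have hx' : r + M + R + 1 ≤ dist x x₀ := le_trans (le_max_left _ _) hx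
    have hball : ∀ z ∈ closedBall x R, M ≤ u z + v z := by
      intro z hz
      by_contra h
      push_neg at h
      have huz : u z < M := by
        have : (0 : ℝ) ≤ v z := infDist_nonneg
        linarith
      have hvz : v z < M := by
        have : (0 : ℝ) ≤ u z := infDist_nonneg
        linarith
      obtain ⟨a, ha, hda⟩ := (infDist_lt_iff hA').1 huz
      obtain ⟨b, hb, hdb⟩ := (infDist_lt_iff hB').1 hvz
      have hzx : dist z x ≤ R := mem_closedBall.1 hz
      have hax : r < dist a x₀ := by
        have t1 : dist x x₀ ≤ dist x z + dist z a + dist a x₀ :=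
          (dist_triangle x a x₀).trans (by linarith [dist_triangle x z a])
        rw [dist_comm x z] at t1
        linarith
      have hbx : r < dist b x₀ := by
        have t1 : dist x x₀ ≤ dist x z + dist z b + dist b x₀ :=
          (dist_triangle x b x₀).trans (by linarith [dist_triangle x z b])
        rw [dist_comm x z] at t1
        linarith
      have h2M := hr a ha hax b hb hbx
      have := dist_triangle a z b
      rw [dist_comm a z] at this
      linarith
    apply EMetric.diam_le
    rintro p ⟨y, hy, rfl⟩ q ⟨z, hz, rfl⟩
    rw [coe_ofNormedAddCommGroup]
    rw [edist_le_ofReal (le_of_lt hε), Complex.isometry_ofReal.dist_eq, Real.dist_eq]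
    have hyz : dist y z ≤ 2 * R := by
      have h1 : dist y x ≤ R := mem_closedBall.1 hy
      have h2 : dist z x ≤ R := mem_closedBall.1 hz
      have h3 := dist_triangle y x z
      rw [dist_comm x z] at h3
      linarith
    have key := frac_diff_le (u := u y) (v := v y) (u' := u z) (v' := v z)
      (d := dist y z) (c := M) infDist_nonneg infDist_nonneg infDist_nonneg infDist_nonneg
      hM (hball y hy) (hball z hz) ?_ ?_
    · calc |f₀ y - f₀ z| ≤ dist y z / M := key
        _ ≤ 2 * R / M := by gcongr
        _ = ε := by rw [hM_def]; field_simp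
    · rw [← Real.dist_eq]
      exact ((lipschitz_infDist_pt (s := A')).dist_le_mul y z).trans (by norm_num)
    · rw [← Real.dist_eq]
      exact ((lipschitz_infDist_pt (s := B')).dist_le_mul y z).trans (by norm_num)
  · intro a ha
    rw [coe_ofNormedAddCommGroup]
    have : u a = 0 := infDist_zero_of_mem ha
    simp only [hf₀_def, this, zero_div, Complex.ofReal_zero]
  · intro b hb
    rw [coe_ofNormedAddCommGroup]
    have hvb : v b = 0 := infDist_zero_of_mem hb
    have hub : u b ≠ 0 := by
      have := hdenom b
      rw [hvb] at this
      intro h; rw [h] at this; linarith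
    simp only [hf₀_def, hvb, add_zero, div_self hub, Complex.ofReal_one]

end Aux

set_option maxHeartbeats 1000000 in
/-- if `A, B` are diverging subsets of a proper metric space `X`, then the closures
of `ι(A)` and `ι(B)` in the Higson compactification meet only inside `ι(X)`. -/
theorem stmt9 (X : Type*) [MetricSpace X] [ProperSpace X] (x₀ : X) (A B : Set X)
    (hdiv : ∀ D : ℝ, 0 < D → ∃ r : ℝ, 0 < r ∧
      ∀ a ∈ A, a ∉ closedBall x₀ r → ∀ b ∈ B, b ∉ closedBall x₀ r → D ≤ dist a b) :
    closure (higsonIota x₀ '' A) ∩ closure (higsonIota x₀ '' B) ⊆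
      Set.range (higsonIota x₀) := by
  have hcont : Continuous (higsonIota x₀) := by
    apply Continuous.subtype_mk
    apply WeakDual.continuous_of_continuous_eval
    intro f
    exact (f : X →ᵇ ℂ).continuous
  have hT2 : T2Space (HigsonCompactification x₀) := by
    unfold HigsonCompactification
    infer_instance
  have hbdd : ∀ (S : Set X) (ρ : ℝ) (χ : HigsonCompactification x₀), S ⊆ closedBall x₀ ρ →
      χ ∈ closure (higsonIota x₀ '' S) → χ ∈ Set.range (higsonIota x₀) := by
    intro S ρ χ hSsub hχ
    have hK : IsCompact (higsonIota x₀ '' closedBall x₀ ρ) :=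
      (isCompact_closedBall x₀ ρ).image hcont
    have hsub : closure (higsonIota x₀ '' S) ⊆ higsonIota x₀ '' closedBall x₀ ρ :=
      closure_minimal (Set.image_mono hSsub) hK.isClosed
    exact Set.image_subset_range _ _ (hsub hχ)
  rintro χ ⟨hA, hB⟩
  by_cases hcase : (∃ r : ℝ, χ ∈ closure (higsonIota x₀ '' (A ∩ closedBall x₀ r))) ∨
      (∃ r : ℝ, χ ∈ closure (higsonIota x₀ '' (B ∩ closedBall x₀ r)))
  · rcases hcase with ⟨r, hr⟩ | ⟨r, hr⟩
    · exact hbdd _ r χ Set.inter_subset_right hr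
    · exact hbdd _ r χ Set.inter_subset_right hr
  push_neg at hcase
  obtain ⟨hcA, hcB⟩ := hcase
  exfalso
  have htailA : ∀ r : ℝ, χ ∈ closure (higsonIota x₀ '' (A \ closedBall x₀ r)) := by
    intro r
    have hA2 := hA
    rw [show A = (A ∩ closedBall x₀ r) ∪ (A \ closedBall x₀ r) from
      (Set.inter_union_diff A _).symm, Set.image_union, closure_union] at hA2
    exact hA2.resolve_left (hcA r)
  have htailB : ∀ r : ℝ, χ ∈ closure (higsonIota x₀ '' (B \ closedBall x₀ r)) := by
    intro r
    have hB2 := hB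
    rw [show B = (B ∩ closedBall x₀ r) ∪ (B \ closedBall x₀ r) from
      (Set.inter_union_diff B _).symm, Set.image_union, closure_union] at hB2
    exact hB2.resolve_left (hcB r)
  obtain ⟨r₁, hr₁pos, hsepr₁⟩ := hdiv 1 one_pos
  set A' := A \ closedBall x₀ r₁ with hA'def
  set B' := B \ closedBall x₀ r₁ with hB'def
  have hA'cl := htailA r₁
  have hB'cl := htailB r₁
  have hA'ne : A'.Nonempty := by
    by_contra h
    rw [Set.not_nonempty_iff_eq_empty, hA'def] at h
    rw [h, Set.image_empty, closure_empty] at hA'cl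
    exact hA'cl
  have hB'ne : B'.Nonempty := by
    by_contra h
    rw [Set.not_nonempty_iff_eq_empty, hB'def] at h
    rw [h, Set.image_empty, closure_empty] at hB'cl
    exact hB'cl
  have hsep1 : ∀ a ∈ A', ∀ b ∈ B', (1 : ℝ) ≤ dist a b :=
    fun a ha b hb => hsepr₁ a ha.1 ha.2 b hb.1 hb.2
  have hfar : ∀ M : ℝ, 0 < M → ∃ r : ℝ, ∀ a ∈ A', r < dist a x₀ → ∀ b ∈ B',
      r < dist b x₀ → 2 * M ≤ dist a b := by
    intro M hM
    obtain ⟨r, hrpos, hr⟩ := hdiv (2 * M) (by linarith)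
    refine ⟨r, fun a ha har b hb hbr => hr a ha.1 ?_ b hb.1 ?_⟩
    · rw [mem_closedBall]; linarith
    · rw [mem_closedBall]; linarith
  obtain ⟨F, hF, hF0, hF1⟩ := exists_sep x₀ A' B' hA'ne hB'ne hsep1 hfar
  have hFmem : F ∈ higsonAlgebra x₀ :=
    StarSubalgebra.le_topologicalClosure _ (StarAlgebra.subset_adjoin ℂ _ hF)
  set Fe : higsonAlgebra x₀ := ⟨F, hFmem⟩ with hFe
  have hΦcont : Continuous (fun ψ : HigsonCompactification x₀ =>
      (ψ : WeakDual ℂ (higsonAlgebra x₀)) Fe) :=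
    (WeakDual.eval_continuous Fe).comp continuous_subtype_val
  have h0 : (χ : WeakDual ℂ (higsonAlgebra x₀)) Fe ∈ closure ({0} : Set ℂ) := by
    refine map_mem_closure (f := fun ψ : HigsonCompactification x₀ =>
      (ψ : WeakDual ℂ (higsonAlgebra x₀)) Fe) hΦcont hA'cl ?_
    rintro _ ⟨a, ha, rfl⟩
    show F a ∈ ({0} : Set ℂ)
    simp [hF0 a ha]
  have h1 : (χ : WeakDual ℂ (higsonAlgebra x₀)) Fe ∈ closure ({1} : Set ℂ) := by
    refine map_mem_closure (f := fun ψ : HigsonCompactification x₀ =>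
      (ψ : WeakDual ℂ (higsonAlgebra x₀)) Fe) hΦcont hB'cl ?_
    rintro _ ⟨b, hb, rfl⟩
    show F b ∈ ({1} : Set ℂ)
    simp [hF1 b hb]
  rw [closure_singleton] at h0 h1
  rw [Set.mem_singleton_iff] at h0 h1
  exact one_ne_zero (h1 ▸ h0)
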